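/- For subdiagrams D, E ⊆ G, B(1_D, 1_E) = dinv(D, E), where B is the unique symmetric bilinear form with B(n,n) = Q(n), and dinv(D,E) = (#{c ∈ D∩E : m_D^E(c) < a/b < M_D^E(c)} + #{c ∈ D∩E : m_E^D(c) < a/b < M_E^D(c)})/2 with m_D^E(c) = leg_E(c)/(arm_D(c)+1) and M_D^E(c) = (leg_E(c)+1)/arm_D(c) (upper inequality automatic when arm = 0). -/
import Mathlib


open scoped BigOperators Classical


def g (a b : ℤ) (p : ℤ × ℤ) : ℤ := a * b - a * p.1 - b * p.2

def Gset (a b : ℤ) : Set (ℤ × ℤ) := {p | 1 ≤ p.1 ∧ 1 ≤ p.2 ∧ 0 < g a b p}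

def IsSubdiagram (a b : ℤ) (D : Set (ℤ × ℤ)) : Prop :=
  D ⊆ Gset a b ∧ ∀ p ∈ D, ∀ q ∈ Gset a b, q.1 ≤ p.1 → q.2 ≤ p.2 → q ∈ D

def U (D : Set (ℤ × ℤ)) : Set (ℤ × ℤ) :=
  {p | p ∉ D ∧ ((p.1, p.2 - 1) ∈ D ∨ (1 ≤ p.1 ∧ p.2 - 1 ≤ 0))}

/-- arm_D(c) = max {k : c − ka ∈ D}, where a acts as the vector (−1,0). -/
noncomputable def arm (D : Set (ℤ × ℤ)) (c : ℤ × ℤ) : ℕ :=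
  sSup {k : ℕ | (c.1 + (k : ℤ), c.2) ∈ D}

/-- leg_D(c) = max {k : c − kb ∈ D}, where b acts as the vector (0,−1). -/
noncomputable def leg (D : Set (ℤ × ℤ)) (c : ℤ × ℤ) : ℕ :=
  sSup {k : ℕ | (c.1, c.2 + (k : ℤ)) ∈ D}

noncomputable def Q (a b : ℤ) (n : ℤ × ℤ → ℝ) : ℝ :=
  ∑ᶠ i ∈ Gset a b, ∑ᶠ j ∈ Gset a b,
    ((if 0 ≤ g a b j - g a b i ∧ g a b j - g a b i < a then (1 : ℝ) else 0) -
      (if b ≤ g a b j - g a b i ∧ g a b j - g a b i < a + b then (1 : ℝ) else 0)) *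
      n i * n j

/-- The unique symmetric bilinear form associated with Q. -/
noncomputable def B (a b : ℤ) (n n' : ℤ × ℤ → ℝ) : ℝ :=
  (Q a b (n + n') - Q a b n - Q a b n') / 2

/-! ### Auxiliary definitions -/

def wv (a b : ℤ) (p : ℤ × ℤ) : ℤ := a * p.1 + b * p.2

noncomputable def NZ (a b : ℤ) (p c : ℤ × ℤ) : ℤ :=
  if p.2 ≤ c.2 ∧ c.1 ≤ p.1 ∧ -a < wv a b p - wv a b c ∧ wv a b p - wv a b c < b then 1 else 0

noncomputable def KZ' (a b : ℤ) (p c : ℤ × ℤ) : ℤ :=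
  (if 0 ≤ wv a b p - wv a b c ∧ wv a b p - wv a b c < a then 1 else 0) -
  (if b ≤ wv a b p - wv a b c ∧ wv a b p - wv a b c < a + b then 1 else 0)

noncomputable def DD (a b : ℤ) (p c : ℤ × ℤ) : ℤ :=
  (NZ a b p c - NZ a b p (c.1, c.2 - 1)) -
  (NZ a b (p.1 - 1, p.2) c - NZ a b (p.1 - 1, p.2) (c.1, c.2 - 1))

/-! ### The key pointwise identity -/

set_option maxHeartbeats 2000000 in
theorem key (a b : ℤ) (ha : 0 < a) (hab : a < b) (p c : ℤ × ℤ) :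
    KZ' a b p c + KZ' a b c p = DD a b p c + DD a b c p := by
  obtain ⟨p1, p2⟩ := p
  obtain ⟨c1, c2⟩ := c
  obtain ⟨k, hk⟩ : ∃ k, p1 = c1 + k := ⟨p1 - c1, by ring⟩
  obtain ⟨l, hl⟩ : ∃ l, p2 = c2 + l := ⟨p2 - c2, by ring⟩
  subst hk hl
  have hb : 0 < b := lt_trans ha hab
  simp only [KZ', NZ, DD, wv]
  rcases lt_trichotomy k 0 with hk0 | hk0 | hk0
  · -- k < 0
    have qk : a * k ≤ -a := by nlinarith
    have g1 : ¬ (c1 ≤ c1 + k) := by omega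
    have g2 : ¬ (c1 ≤ c1 + k - 1) := by omega
    have g3 : (c1 + k ≤ c1) := by omega
    have g4 : (c1 + k ≤ c1 - 1) := by omega
    rcases lt_trichotomy l 0 with hl0 | hl0 | hl0
    · have ql : b * l = -b ∨ b * l ≤ -2*b := by
        rcases eq_or_lt_of_le (show l ≤ -1 by omega) with h | h
        · left; rw [h]; ring
        · right; nlinarith
      have f1 : (c2 + l ≤ c2) := by omega
      have f2 : (c2 + l ≤ c2 - 1) := by omega
      have f3 : ¬ (c2 ≤ c2 + l) := by omega
      have f4 : ¬ (c2 ≤ c2 + l - 1) := by omega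
      simp only [f1, f2, f3, f4, g1, g2, g3, g4, if_true, if_false, true_and, false_and,
        and_true, and_false, ite_false, ite_true]
      ring_nf
      split_ifs <;> omega
    · subst hl0
      have f1 : (c2 + 0 ≤ c2) := by omega
      have f2 : ¬ (c2 + 0 ≤ c2 - 1) := by omega
      have f3 : (c2 ≤ c2 + 0) := by omega
      have f4 : ¬ (c2 ≤ c2 + 0 - 1) := by omega
      simp only [f1, f2, f3, f4, g1, g2, g3, g4, if_true, if_false, true_and, false_and,
        and_true, and_false, ite_false, ite_true]
      ring_nf
      split_ifs <;> omega
    · have ql : b * l = b ∨ 2*b ≤ b * l := by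
        rcases eq_or_lt_of_le (show 1 ≤ l by omega) with h | h
        · left; rw [← h]; ring
        · right; nlinarith
      have f1 : ¬ (c2 + l ≤ c2) := by omega
      have f2 : ¬ (c2 + l ≤ c2 - 1) := by omega
      have f3 : (c2 ≤ c2 + l) := by omega
      have f4 : (c2 ≤ c2 + l - 1) := by omega
      simp only [f1, f2, f3, f4, g1, g2, g3, g4, if_true, if_false, true_and, false_and,
        and_true, and_false, ite_false, ite_true]
      ring_nf
      split_ifs <;> omega
  · -- k = 0
    subst hk0
    have g1 : (c1 ≤ c1 + 0) := by omega
    have g2 : ¬ (c1 ≤ c1 + 0 - 1) := by omega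
    have g3 : (c1 + 0 ≤ c1) := by omega
    have g4 : ¬ (c1 + 0 ≤ c1 - 1) := by omega
    rcases lt_trichotomy l 0 with hl0 | hl0 | hl0
    · have ql : b * l = -b ∨ b * l ≤ -2*b := by
        rcases eq_or_lt_of_le (show l ≤ -1 by omega) with h | h
        · left; rw [h]; ring
        · right; nlinarith
      have f1 : (c2 + l ≤ c2) := by omega
      have f2 : (c2 + l ≤ c2 - 1) := by omega
      have f3 : ¬ (c2 ≤ c2 + l) := by omega
      have f4 : ¬ (c2 ≤ c2 + l - 1) := by omega
      simp only [f1, f2, f3, f4, g1, g2, g3, g4, if_true, if_false, true_and, false_and,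
        and_true, and_false, ite_false, ite_true]
      ring_nf
      split_ifs <;> omega
    · subst hl0
      simp only [add_zero, le_refl, true_and, if_true]
      ring_nf
      split_ifs <;> omega
    · have ql : b * l = b ∨ 2*b ≤ b * l := by
        rcases eq_or_lt_of_le (show 1 ≤ l by omega) with h | h
        · left; rw [← h]; ring
        · right; nlinarith
      have f1 : ¬ (c2 + l ≤ c2) := by omega
      have f2 : ¬ (c2 + l ≤ c2 - 1) := by omega
      have f3 : (c2 ≤ c2 + l) := by omega
      have f4 : (c2 ≤ c2 + l - 1) := by omega
      simp only [f1, f2, f3, f4, g1, g2, g3, g4, if_true, if_false, true_and, false_and,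
        and_true, and_false, ite_false, ite_true]
      ring_nf
      split_ifs <;> omega
  · -- k > 0
    have qk : a ≤ a * k := le_mul_of_one_le_right ha.le (by omega)
    have g1 : (c1 ≤ c1 + k) := by omega
    have g2 : (c1 ≤ c1 + k - 1) := by omega
    have g3 : ¬ (c1 + k ≤ c1) := by omega
    have g4 : ¬ (c1 + k ≤ c1 - 1) := by omega
    rcases lt_trichotomy l 0 with hl0 | hl0 | hl0
    · have ql : b * l = -b ∨ b * l ≤ -2*b := by
        rcases eq_or_lt_of_le (show l ≤ -1 by omega) with h | h
        · left; rw [h]; ring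
        · right; nlinarith
      have f1 : (c2 + l ≤ c2) := by omega
      have f2 : (c2 + l ≤ c2 - 1) := by omega
      have f3 : ¬ (c2 ≤ c2 + l) := by omega
      have f4 : ¬ (c2 ≤ c2 + l - 1) := by omega
      simp only [f1, f2, f3, f4, g1, g2, g3, g4, if_true, if_false, true_and, false_and,
        and_true, and_false, ite_false, ite_true]
      ring_nf
      split_ifs <;> omega
    · subst hl0
      have f1 : (c2 + 0 ≤ c2) := by omega
      have f2 : ¬ (c2 + 0 ≤ c2 - 1) := by omega
      have f3 : (c2 ≤ c2 + 0) := by omega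
      have f4 : ¬ (c2 ≤ c2 + 0 - 1) := by omega
      simp only [f1, f2, f3, f4, g1, g2, g3, g4, if_true, if_false, true_and, false_and,
        and_true, and_false, ite_false, ite_true]
      ring_nf
      split_ifs <;> omega
    · have ql : b * l = b ∨ 2*b ≤ b * l := by
        rcases eq_or_lt_of_le (show 1 ≤ l by omega) with h | h
        · left; rw [← h]; ring
        · right; nlinarith
      have f1 : ¬ (c2 + l ≤ c2) := by omega
      have f2 : ¬ (c2 + l ≤ c2 - 1) := by omega
      have f3 : (c2 ≤ c2 + l) := by omega
      have f4 : (c2 ≤ c2 + l - 1) := by omega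
      simp only [f1, f2, f3, f4, g1, g2, g3, g4, if_true, if_false, true_and, false_and,
        and_true, and_false, ite_false, ite_true]
      ring_nf
      split_ifs <;> omega

/-! ### Geometry of subdiagrams, arms and legs -/

section armleg
variable {a b : ℤ} {D E : Set (ℤ × ℤ)}

lemma Gmono (ha : 0 < a) (hb : 0 < b) {p q : ℤ × ℤ} (hp : p ∈ Gset a b)
    (h1 : 1 ≤ q.1) (h2 : 1 ≤ q.2) (h3 : q.1 ≤ p.1) (h4 : q.2 ≤ p.2) : q ∈ Gset a b := by
  obtain ⟨e1, e2, e3⟩ := hp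
  refine ⟨h1, h2, ?_⟩
  simp only [g] at e3 ⊢
  nlinarith

lemma arm_eq_of (ha : 0 < a) (hb : 0 < b) (hD : IsSubdiagram a b D)
    {z i : ℤ × ℤ} (hz : z ∈ D) (hi : i ∈ D) (hrow : i.2 = z.2) (hle : z.1 ≤ i.1)
    (hend : (i.1 + 1, i.2) ∉ D) : (arm D z : ℤ) = i.1 - z.1 := by
  have hiG := hD.1 hi
  have hzG := hD.1 hz
  have hgr : IsGreatest {k : ℕ | (z.1 + (k : ℤ), z.2) ∈ D} (i.1 - z.1).toNat := by
    constructor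
    · show (z.1 + ((i.1 - z.1).toNat : ℤ), z.2) ∈ D
      rw [Int.toNat_of_nonneg (by omega)]
      have heq : (z.1 + (i.1 - z.1), z.2) = i := by
        rw [Prod.ext_iff]
        exact ⟨by ring_nf, hrow.symm⟩
      rwa [heq]
    · rintro k (hk : (z.1 + (k : ℤ), z.2) ∈ D)
      by_contra hcon
      push_neg at hcon
      have hklt : i.1 - z.1 < (k : ℤ) := by
        have := Int.toNat_of_nonneg (show (0:ℤ) ≤ i.1 - z.1 by omega)
        omega
      apply hend
      have hq1 : (1:ℤ) ≤ i.1 + 1 := by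
        have := hiG.1
        omega
      refine hD.2 _ hk (i.1 + 1, i.2) ?_ (by simp only; omega)
        (by simp only [hrow]; exact le_refl _)
      exact Gmono ha hb (hD.1 hk) hq1 (by simp only [hrow]; exact hzG.2.1)
        (by simp only; omega) (by simp only [hrow]; exact le_refl _)
  rw [arm, hgr.csSup_eq, Int.toNat_of_nonneg (by omega)]

lemma leg_eq_of (ha : 0 < a) (hb : 0 < b) (hD : IsSubdiagram a b D)
    {z j : ℤ × ℤ} (hz : z ∈ D) (hj : j ∈ D) (hcol : j.1 = z.1) (hle : z.2 ≤ j.2)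
    (hend : (j.1, j.2 + 1) ∉ D) : (leg D z : ℤ) = j.2 - z.2 := by
  have hjG := hD.1 hj
  have hzG := hD.1 hz
  have hgr : IsGreatest {k : ℕ | (z.1, z.2 + (k : ℤ)) ∈ D} (j.2 - z.2).toNat := by
    constructor
    · show (z.1, z.2 + ((j.2 - z.2).toNat : ℤ)) ∈ D
      rw [Int.toNat_of_nonneg (by omega)]
      have heq : (z.1, z.2 + (j.2 - z.2)) = j := by
        rw [Prod.ext_iff]
        exact ⟨hcol.symm, by ring_nf⟩
      rwa [heq]
    · rintro k (hk : (z.1, z.2 + (k : ℤ)) ∈ D)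
      by_contra hcon
      push_neg at hcon
      have hklt : j.2 - z.2 < (k : ℤ) := by
        have := Int.toNat_of_nonneg (show (0:ℤ) ≤ j.2 - z.2 by omega)
        omega
      apply hend
      have hq2 : (1:ℤ) ≤ j.2 + 1 := by
        have := hjG.2.1
        omega
      refine hD.2 _ hk (j.1, j.2 + 1) ?_ (by simp only [hcol]; exact le_refl _)
        (by simp only; omega)
      exact Gmono ha hb (hD.1 hk) (by simp only [hcol]; exact hzG.1) hq2
        (by simp only [hcol]; exact le_refl _) (by simp only; omega)
  rw [leg, hgr.csSup_eq, Int.toNat_of_nonneg (by omega)]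

lemma arm_spec (ha : 0 < a) (hb : 0 < b) (hD : IsSubdiagram a b D)
    {z : ℤ × ℤ} (hz : z ∈ D) :
    (z.1 + (arm D z : ℤ), z.2) ∈ D ∧ (z.1 + (arm D z : ℤ) + 1, z.2) ∉ D := by
  have hzG := hD.1 hz
  have hbdd : BddAbove {k : ℕ | (z.1 + (k : ℤ), z.2) ∈ D} := by
    refine ⟨b.toNat, ?_⟩
    rintro k (hk : (z.1 + (k : ℤ), z.2) ∈ D)
    obtain ⟨e1, e2, e3⟩ := hD.1 hk
    simp only [g] at e3
    simp only at e1 e2 e3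
    have hz1 : 1 ≤ z.1 := hzG.1
    have hk2 : (k : ℤ) ≤ b := by
      by_contra hcc
      push_neg at hcc
      have h2 : b + 2 ≤ z.1 + (k : ℤ) := by omega
      have h3 : a * (b + 2) ≤ a * (z.1 + (k:ℤ)) := mul_le_mul_of_nonneg_left h2 ha.le
      have h4 : b * 1 ≤ b * z.2 := mul_le_mul_of_nonneg_left e2 hb.le
      nlinarith
    omega
  have hne : {k : ℕ | (z.1 + (k : ℤ), z.2) ∈ D}.Nonempty := by
    refine ⟨0, ?_⟩
    show (z.1 + ((0:ℕ) : ℤ), z.2) ∈ D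
    simpa using hz
  have hmem := Nat.sSup_mem hne hbdd
  constructor
  · exact hmem
  · intro hcon
    have hmm : arm D z + 1 ∈ {k : ℕ | (z.1 + (k : ℤ), z.2) ∈ D} := by
      show (z.1 + ((arm D z + 1 : ℕ) : ℤ), z.2) ∈ D
      push_cast
      convert hcon using 2
      ring
    have := le_csSup hbdd hmm
    simp only [arm] at this ⊢
    omega

lemma leg_spec (ha : 0 < a) (hb : 0 < b) (hD : IsSubdiagram a b D)
    {z : ℤ × ℤ} (hz : z ∈ D) :
    (z.1, z.2 + (leg D z : ℤ)) ∈ D ∧ (z.1, z.2 + (leg D z : ℤ) + 1) ∉ D := by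
  have hzG := hD.1 hz
  have hbdd : BddAbove {k : ℕ | (z.1, z.2 + (k : ℤ)) ∈ D} := by
    refine ⟨a.toNat, ?_⟩
    rintro k (hk : (z.1, z.2 + (k : ℤ)) ∈ D)
    obtain ⟨e1, e2, e3⟩ := hD.1 hk
    simp only [g] at e3
    simp only at e1 e2 e3
    have hz2 : 1 ≤ z.2 := hzG.2.1
    have hk2 : (k : ℤ) ≤ a := by
      by_contra hcc
      push_neg at hcc
      have h2 : a + 2 ≤ z.2 + (k : ℤ) := by omega
      have h3 : b * (a + 2) ≤ b * (z.2 + (k:ℤ)) := mul_le_mul_of_nonneg_left h2 hb.le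
      have h4 : a * 1 ≤ a * z.1 := mul_le_mul_of_nonneg_left e1 ha.le
      nlinarith
    omega
  have hne : {k : ℕ | (z.1, z.2 + (k : ℤ)) ∈ D}.Nonempty := by
    refine ⟨0, ?_⟩
    show (z.1, z.2 + ((0:ℕ) : ℤ)) ∈ D
    simpa using hz
  have hmem := Nat.sSup_mem hne hbdd
  refine ⟨hmem, ?_⟩
  intro hcon
  have hmm : leg D z + 1 ∈ {k : ℕ | (z.1, z.2 + (k : ℤ)) ∈ D} := by
    show (z.1, z.2 + ((leg D z + 1 : ℕ) : ℤ)) ∈ D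
    push_cast
    convert hcon using 2
    ring
  have := le_csSup hbdd hmm
  simp only [leg] at this ⊢
  omega

/-! ### Telescoping -/

lemma tele1 (ha : 0 < a) (hb : 0 < b) (hD : IsSubdiagram a b D) (hDfin : D.Finite)
    (F : ℤ × ℤ → ℤ) (hF0 : ∀ q : ℤ × ℤ, q.1 ≤ 0 → F q = 0) :
    ∑ p ∈ hDfin.toFinset, (F p - F (p.1 - 1, p.2)) =
      ∑ p ∈ hDfin.toFinset.filter (fun p => (p.1 + 1, p.2) ∉ D), F p := by
  classical
  set DF := hDfin.toFinset with hDF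
  have hmem : ∀ p, p ∈ DF ↔ p ∈ D := fun p => hDfin.mem_toFinset
  rw [Finset.sum_sub_distrib]
  have hinj : Set.InjOn (fun p : ℤ × ℤ => (p.1 - 1, p.2)) DF := by
    rintro ⟨x1, y1⟩ - ⟨x2, y2⟩ - h
    simp only [Prod.mk.injEq] at h ⊢
    omega
  rw [← Finset.sum_image hinj]
  rw [← Finset.sum_sdiff_sub_sum_sdiff]
  have himg : ∀ q : ℤ × ℤ, q ∈ DF.image (fun p : ℤ × ℤ => (p.1 - 1, p.2)) ↔ (q.1 + 1, q.2) ∈ D := by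
    intro q
    simp only [Finset.mem_image, hmem]
    constructor
    · rintro ⟨p, hp, rfl⟩; simpa using hp
    · intro h; exact ⟨(q.1 + 1, q.2), h, by simp⟩
  have h2 : ∑ q ∈ DF.image (fun p : ℤ × ℤ => (p.1 - 1, p.2)) \ DF, F q = 0 := by
    apply Finset.sum_eq_zero
    intro q hq
    rw [Finset.mem_sdiff, himg, hmem] at hq
    obtain ⟨hq1, hq2⟩ := hq
    apply hF0
    by_contra hcon
    push_neg at hcon
    apply hq2
    have hqG : q ∈ Gset a b := by
      obtain ⟨e1, e2, e3⟩ := hD.1 hq1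
      refine ⟨by omega, by simpa using e2, ?_⟩
      simp only [g] at e3 ⊢
      simp only at e1 e3 ⊢
      nlinarith
    exact hD.2 _ hq1 q hqG (by simp) (by simp)
  rw [h2, sub_zero]
  congr 1
  ext p
  simp only [Finset.mem_sdiff, Finset.mem_filter, himg]

lemma tele2 (ha : 0 < a) (hb : 0 < b) (hE : IsSubdiagram a b E) (hEfin : E.Finite)
    (F : ℤ × ℤ → ℤ) (hF0 : ∀ q : ℤ × ℤ, q.2 ≤ 0 → F q = 0) :
    ∑ c ∈ hEfin.toFinset, (F c - F (c.1, c.2 - 1)) =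
      ∑ c ∈ hEfin.toFinset.filter (fun c => (c.1, c.2 + 1) ∉ E), F c := by
  classical
  set EF := hEfin.toFinset with hEF
  have hmem : ∀ p, p ∈ EF ↔ p ∈ E := fun p => hEfin.mem_toFinset
  rw [Finset.sum_sub_distrib]
  have hinj : Set.InjOn (fun p : ℤ × ℤ => (p.1, p.2 - 1)) EF := by
    rintro ⟨x1, y1⟩ - ⟨x2, y2⟩ - h
    simp only [Prod.mk.injEq] at h ⊢
    omega
  rw [← Finset.sum_image hinj]
  rw [← Finset.sum_sdiff_sub_sum_sdiff]
  have himg : ∀ q : ℤ × ℤ, q ∈ EF.image (fun p : ℤ × ℤ => (p.1, p.2 - 1)) ↔ (q.1, q.2 + 1) ∈ E := by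
    intro q
    simp only [Finset.mem_image, hmem]
    constructor
    · rintro ⟨p, hp, rfl⟩; simpa using hp
    · intro h; exact ⟨(q.1, q.2 + 1), h, by simp⟩
  have h2 : ∑ q ∈ EF.image (fun p : ℤ × ℤ => (p.1, p.2 - 1)) \ EF, F q = 0 := by
    apply Finset.sum_eq_zero
    intro q hq
    rw [Finset.mem_sdiff, himg, hmem] at hq
    obtain ⟨hq1, hq2⟩ := hq
    apply hF0
    by_contra hcon
    push_neg at hcon
    apply hq2
    have hqG : q ∈ Gset a b := by
      obtain ⟨e1, e2, e3⟩ := hE.1 hq1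
      refine ⟨by simpa using e1, by omega, ?_⟩
      simp only [g] at e3 ⊢
      simp only at e2 e3 ⊢
      nlinarith
    exact hE.2 _ hq1 q hqG (by simp) (by simp)
  rw [h2, sub_zero]
  congr 1
  ext p
  simp only [Finset.mem_sdiff, Finset.mem_filter, himg]

/-! ### The counting lemma -/

set_option maxHeartbeats 1000000 in
lemma count_lemma (ha : 0 < a) (hb : 0 < b) (hD : IsSubdiagram a b D) (hE : IsSubdiagram a b E)
    (hDfin : D.Finite) (hEfin : E.Finite) :
    ∑ p ∈ hDfin.toFinset, ∑ c ∈ hEfin.toFinset, DD a b p c =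
      ((hDfin.toFinset.filter (fun z => z ∈ E ∧
          b * (leg E z : ℤ) < a * ((arm D z : ℤ) + 1) ∧
          a * (arm D z : ℤ) < b * ((leg E z : ℤ) + 1))).card : ℤ) := by
  classical
  set DF := hDfin.toFinset with hDFdef
  set EF := hEfin.toFinset with hEFdef
  have hmemD : ∀ p, p ∈ DF ↔ p ∈ D := fun p => hDfin.mem_toFinset
  have hmemE : ∀ p, p ∈ EF ↔ p ∈ E := fun p => hEfin.mem_toFinset
  set REF := DF.filter (fun p => (p.1 + 1, p.2) ∉ D) with hREF
  set CTF := EF.filter (fun c => (c.1, c.2 + 1) ∉ E) with hCTF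
  have step1 : ∑ p ∈ DF, ∑ c ∈ EF, DD a b p c = ∑ p ∈ REF, ∑ c ∈ CTF, NZ a b p c := by
    rw [Finset.sum_comm]
    have e1 : ∀ c ∈ EF, ∑ p ∈ DF, DD a b p c
        = ∑ p ∈ REF, (NZ a b p c - NZ a b p (c.1, c.2 - 1)) := by
      intro c hc
      have hc1 : (1:ℤ) ≤ c.1 := ((hE.1 ((hmemE c).1 hc))).1
      have := tele1 ha hb hD hDfin (fun p => NZ a b p c - NZ a b p (c.1, c.2 - 1))
        (by
          intro q hq
          have n1 : NZ a b q c = 0 := by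
            rw [NZ, if_neg]; rintro ⟨-, h2, -⟩; omega
          have n2 : NZ a b q (c.1, c.2 - 1) = 0 := by
            rw [NZ, if_neg]; rintro ⟨-, h2, -⟩; simp only at h2; omega
          show NZ a b q c - NZ a b q (c.1, c.2 - 1) = 0
          rw [n1, n2]
          ring)
      rw [← this]
      apply Finset.sum_congr rfl
      intro p _
      simp only [DD]
    rw [Finset.sum_congr rfl e1, Finset.sum_comm]
    apply Finset.sum_congr rfl
    intro p hp
    have hp2 : (1:ℤ) ≤ p.2 := ((hD.1 ((hmemD p).1 (Finset.mem_filter.1 hp).1))).2.1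
    exact tele2 ha hb hE hEfin (fun c => NZ a b p c)
      (by
        intro q hq
        show NZ a b p q = 0
        rw [NZ, if_neg]; rintro ⟨h1, -⟩; omega)
  rw [step1]
  have step3 : ∑ p ∈ REF, ∑ c ∈ CTF, NZ a b p c =
      (((REF ×ˢ CTF).filter (fun x : (ℤ × ℤ) × (ℤ × ℤ) =>
        x.1.2 ≤ x.2.2 ∧ x.2.1 ≤ x.1.1 ∧ -a < wv a b x.1 - wv a b x.2 ∧
          wv a b x.1 - wv a b x.2 < b)).card : ℤ) := by
    rw [← Finset.sum_product']
    rw [← Finset.sum_boole]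
    apply Finset.sum_congr rfl
    intro x hx
    rw [NZ]
  rw [step3]
  congr 1
  apply Finset.card_bij (fun (x : (ℤ × ℤ) × (ℤ × ℤ)) _ => ((x.2.1, x.1.2) : ℤ × ℤ))
  · rintro ⟨p, c⟩ hx
    simp only [Finset.mem_filter, Finset.mem_product] at hx
    obtain ⟨⟨hpR, hcC⟩, w1, w2, w3, w4⟩ := hx
    rw [hREF, Finset.mem_filter] at hpR
    rw [hCTF, Finset.mem_filter] at hcC
    obtain ⟨hpD, hpend⟩ := hpR
    obtain ⟨hcE, hcend⟩ := hcC
    rw [hmemD] at hpD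
    rw [hmemE] at hcE
    have hpG := hD.1 hpD
    have hcG := hE.1 hcE
    have hzD : ((c.1, p.2) : ℤ × ℤ) ∈ D := by
      refine hD.2 p hpD _ ?_ w2 (le_refl _)
      exact Gmono ha hb hpG hcG.1 hpG.2.1 w2 (le_refl _)
    have hzE : ((c.1, p.2) : ℤ × ℤ) ∈ E := by
      refine hE.2 c hcE _ ?_ (le_refl _) w1
      exact Gmono ha hb hcG hcG.1 hpG.2.1 (le_refl _) w1
    have harm : (arm D (c.1, p.2) : ℤ) = p.1 - c.1 := by
      have := arm_eq_of ha hb hD hzD hpD rfl w2 (by simpa using hpend)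
      simpa using this
    have hleg : (leg E (c.1, p.2) : ℤ) = c.2 - p.2 := by
      have := leg_eq_of ha hb hE hzE hcE rfl w1 (by simpa using hcend)
      simpa using this
    rw [Finset.mem_filter, hmemD]
    refine ⟨hzD, hzE, ?_, ?_⟩
    · rw [harm, hleg]
      simp only [wv] at w3
      linarith
    · rw [harm, hleg]
      simp only [wv] at w4
      linarith
  · rintro ⟨p, c⟩ hx ⟨p', c'⟩ hx' heq
    simp only [Prod.mk.injEq] at heq
    obtain ⟨hc1, hp2⟩ := heq
    simp only [Finset.mem_filter, Finset.mem_product] at hx hx'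
    obtain ⟨⟨hpR, hcC⟩, w1, w2, -, -⟩ := hx
    obtain ⟨⟨hpR', hcC'⟩, w1', w2', -, -⟩ := hx'
    rw [hREF, Finset.mem_filter] at hpR hpR'
    rw [hCTF, Finset.mem_filter] at hcC hcC'
    obtain ⟨hpD, hpend⟩ := hpR
    obtain ⟨hpD', hpend'⟩ := hpR'
    obtain ⟨hcE, hcend⟩ := hcC
    obtain ⟨hcE', hcend'⟩ := hcC'
    rw [hmemD] at hpD hpD'
    rw [hmemE] at hcE hcE'
    have hpp : p.1 = p'.1 := by
      by_contra hne
      rcases lt_or_gt_of_ne hne with h | h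
      · apply hpend
        refine hD.2 p' hpD' _ ?_ (by simp only; omega) (by simp only; omega)
        exact Gmono ha hb (hD.1 hpD') (by simp only; have := (hD.1 hpD).1; omega)
          (by simp only; exact (hD.1 hpD).2.1) (by simp only; omega) (by simp only; omega)
      · apply hpend'
        refine hD.2 p hpD _ ?_ (by simp only; omega) (by simp only; omega)
        exact Gmono ha hb (hD.1 hpD) (by simp only; have := (hD.1 hpD').1; omega)
          (by simp only; exact (hD.1 hpD').2.1) (by simp only; omega) (by simp only; omega)
    have hcc : c.2 = c'.2 := by
      by_contra hne
      rcases lt_or_gt_of_ne hne with h | h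
      · apply hcend
        refine hE.2 c' hcE' _ ?_ (by simp only; omega) (by simp only; omega)
        exact Gmono ha hb (hE.1 hcE') (by simp only; exact (hE.1 hcE).1)
          (by simp only; have := (hE.1 hcE).2.1; omega) (by simp only; omega) (by simp only; omega)
      · apply hcend'
        refine hE.2 c hcE _ ?_ (by simp only; omega) (by simp only; omega)
        exact Gmono ha hb (hE.1 hcE) (by simp only; exact (hE.1 hcE').1)
          (by simp only; have := (hE.1 hcE').2.1; omega) (by simp only; omega) (by simp only; omega)
    have hpe : p = p' := Prod.ext hpp hp2
    have hce : c = c' := Prod.ext hc1 hcc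
    rw [hpe, hce]
  · intro z hz
    rw [Finset.mem_filter, hmemD] at hz
    obtain ⟨hzD, hzE, ineq1, ineq2⟩ := hz
    obtain ⟨hpD, hpend⟩ := arm_spec ha hb hD hzD
    obtain ⟨hcE, hcend⟩ := leg_spec ha hb hE hzE
    refine ⟨((z.1 + (arm D z : ℤ), z.2), (z.1, z.2 + (leg E z : ℤ))), ?_, ?_⟩
    · simp only [Finset.mem_filter, Finset.mem_product]
      refine ⟨⟨?_, ?_⟩, ?_, ?_, ?_, ?_⟩
      · rw [hREF, Finset.mem_filter, hmemD]
        exact ⟨hpD, by simpa using hpend⟩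
      · rw [hCTF, Finset.mem_filter, hmemE]
        exact ⟨hcE, by simpa using hcend⟩
      · show z.2 ≤ z.2 + (leg E z : ℤ)
        omega
      · show z.1 ≤ z.1 + (arm D z : ℤ)
        omega
      · show -a < wv a b (z.1 + (arm D z : ℤ), z.2) - wv a b (z.1, z.2 + (leg E z : ℤ))
        simp only [wv]
        linarith
      · show wv a b (z.1 + (arm D z : ℤ), z.2) - wv a b (z.1, z.2 + (leg E z : ℤ)) < b
        simp only [wv]
        linarith
    · simp

end armleg

/-! ### STATEMENT 14 -/

set_option maxHeartbeats 1000000 in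
theorem stmt14 (a b : ℤ) (ha : 1 < a) (hab : a < b) (hcop : IsCoprime a b)
    (D E : Set (ℤ × ℤ)) (hD : IsSubdiagram a b D) (hE : IsSubdiagram a b E) :
    B a b (fun p => if p ∈ D then (1 : ℝ) else 0)
      (fun p => if p ∈ E then (1 : ℝ) else 0) =
      ((Set.ncard {c : ℤ × ℤ | c ∈ D ∧ c ∈ E ∧
          b * (leg E c : ℤ) < a * ((arm D c : ℤ) + 1) ∧
          a * (arm D c : ℤ) < b * ((leg E c : ℤ) + 1)} : ℝ) +
        (Set.ncard {c : ℤ × ℤ | c ∈ D ∧ c ∈ E ∧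
          b * (leg D c : ℤ) < a * ((arm E c : ℤ) + 1) ∧
          a * (arm E c : ℤ) < b * ((leg D c : ℤ) + 1)} : ℝ)) / 2 := by
  classical
  have ha0 : (0:ℤ) < a := by omega
  have hb0 : (0:ℤ) < b := by omega
  -- finiteness
  have hGfin : (Gset a b).Finite := by
    apply Set.Finite.subset (Set.finite_Icc ((1 : ℤ), (1 : ℤ)) (b, a))
    rintro ⟨x, y⟩ ⟨h1, h2, h3⟩
    simp only [g] at h3
    simp only at h1 h2 h3
    simp only [Set.mem_Icc, Prod.mk_le_mk]
    refine ⟨⟨h1, h2⟩, ?_, ?_⟩ <;> nlinarith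
  have hDfin : D.Finite := hGfin.subset hD.1
  have hEfin : E.Finite := hGfin.subset hE.1
  set GF := hGfin.toFinset with hGFdef
  set DF := hDfin.toFinset with hDFdef
  set EF := hEfin.toFinset with hEFdef
  have hmemD : ∀ p, p ∈ DF ↔ p ∈ D := fun p => hDfin.mem_toFinset
  have hmemE : ∀ p, p ∈ EF ↔ p ∈ E := fun p => hEfin.mem_toFinset
  have hmemG : ∀ p, p ∈ GF ↔ p ∈ Gset a b := fun p => hGfin.mem_toFinset
  -- the real kernel
  set κ : (ℤ × ℤ) → (ℤ × ℤ) → ℝ := fun i j =>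
    ((if 0 ≤ g a b j - g a b i ∧ g a b j - g a b i < a then (1 : ℝ) else 0) -
      (if b ≤ g a b j - g a b i ∧ g a b j - g a b i < a + b then (1 : ℝ) else 0)) with hκ
  -- expansion of Q
  have hQ : ∀ n : (ℤ × ℤ) → ℝ, Q a b n = ∑ i ∈ GF, ∑ j ∈ GF, κ i j * n i * n j := by
    intro n
    have hco : Gset a b = ↑GF := (Set.Finite.coe_toFinset _).symm
    rw [Q, hco, finsum_mem_coe_finset]
    apply Finset.sum_congr rfl
    intro i _
    rw [finsum_mem_coe_finset]
  -- expansion of B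
  set nD : (ℤ × ℤ) → ℝ := fun p => if p ∈ D then (1 : ℝ) else 0 with hnD
  set nE : (ℤ × ℤ) → ℝ := fun p => if p ∈ E then (1 : ℝ) else 0 with hnE
  have hB : B a b nD nE =
      (∑ i ∈ GF, ∑ j ∈ GF, κ i j * (nD i * nE j + nE i * nD j)) / 2 := by
    rw [B, hQ, hQ, hQ]
    congr 1
    rw [← Finset.sum_sub_distrib, ← Finset.sum_sub_distrib]
    apply Finset.sum_congr rfl
    intro i _
    rw [← Finset.sum_sub_distrib, ← Finset.sum_sub_distrib]
    apply Finset.sum_congr rfl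
    intro j _
    simp only [Pi.add_apply]
    ring
  -- reduce to sums over D and E
  have hsplit : ∑ i ∈ GF, ∑ j ∈ GF, κ i j * (nD i * nE j + nE i * nD j)
      = (∑ i ∈ DF, ∑ j ∈ EF, κ i j) + (∑ i ∈ EF, ∑ j ∈ DF, κ i j) := by
    have hDfil : DF = GF.filter (fun p => p ∈ D) := by
      ext p
      simp only [hmemD, Finset.mem_filter, hmemG]
      exact ⟨fun h => ⟨hD.1 h, h⟩, fun h => h.2⟩
    have hEfil : EF = GF.filter (fun p => p ∈ E) := by
      ext p
      simp only [hmemE, Finset.mem_filter, hmemG]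
      exact ⟨fun h => ⟨hE.1 h, h⟩, fun h => h.2⟩
    have h1 : ∑ i ∈ DF, ∑ j ∈ EF, κ i j
        = ∑ i ∈ GF, (if i ∈ D then ∑ j ∈ EF, κ i j else 0) := by
      rw [hDfil, Finset.sum_filter]
    have h2 : ∑ i ∈ EF, ∑ j ∈ DF, κ i j
        = ∑ i ∈ GF, (if i ∈ E then ∑ j ∈ DF, κ i j else 0) := by
      rw [hEfil, Finset.sum_filter]
    rw [h1, h2, ← Finset.sum_add_distrib]
    apply Finset.sum_congr rfl
    intro i _
    have hE1 : ∑ j ∈ EF, κ i j = ∑ j ∈ GF, (if j ∈ E then κ i j else 0) := by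
      rw [hEfil, Finset.sum_filter]
    have hD1 : ∑ j ∈ DF, κ i j = ∑ j ∈ GF, (if j ∈ D then κ i j else 0) := by
      rw [hDfil, Finset.sum_filter]
    have pull : ∀ (P : Prop) (f : ℤ × ℤ → ℝ),
        (if P then ∑ j ∈ GF, f j else 0) = ∑ j ∈ GF, (if P then f j else 0) := by
      intro P f
      split_ifs with h
      · rfl
      · rw [Finset.sum_const_zero]
    rw [hE1, hD1, pull, pull, ← Finset.sum_add_distrib]
    apply Finset.sum_congr rfl
    intro j _
    simp only [hnD, hnE]
    by_cases hiD : i ∈ D <;> by_cases hiE : i ∈ E <;> by_cases hjD : j ∈ D <;>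
      by_cases hjE : j ∈ E <;>
      simp only [hiD, hiE, hjD, hjE, if_true, if_false] <;> ring
  -- cast to integers
  have hcast : ∀ i j : ℤ × ℤ, κ i j = ((KZ' a b i j : ℤ) : ℝ) := by
    intro i j
    have hgw : g a b j - g a b i = wv a b i - wv a b j := by
      simp only [g, wv]; ring
    rw [hκ]
    simp only [hgw, KZ']
    push_cast
    rfl
  have hc1 : ∑ i ∈ DF, ∑ j ∈ EF, κ i j = ((∑ i ∈ DF, ∑ j ∈ EF, KZ' a b i j : ℤ) : ℝ) := by
    push_cast
    apply Finset.sum_congr rfl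
    intro i _
    apply Finset.sum_congr rfl
    intro j _
    exact hcast i j
  have hc2 : ∑ i ∈ EF, ∑ j ∈ DF, κ i j = ((∑ i ∈ EF, ∑ j ∈ DF, KZ' a b i j : ℤ) : ℝ) := by
    push_cast
    apply Finset.sum_congr rfl
    intro i _
    apply Finset.sum_congr rfl
    intro j _
    exact hcast i j
  -- the integer identity
  have hswap : ∑ i ∈ EF, ∑ j ∈ DF, KZ' a b i j = ∑ p ∈ DF, ∑ c ∈ EF, KZ' a b c p :=
    Finset.sum_comm
  have hmain : (∑ i ∈ DF, ∑ j ∈ EF, KZ' a b i j) + (∑ i ∈ EF, ∑ j ∈ DF, KZ' a b i j)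
      = ((DF.filter (fun z => z ∈ E ∧
          b * (leg E z : ℤ) < a * ((arm D z : ℤ) + 1) ∧
          a * (arm D z : ℤ) < b * ((leg E z : ℤ) + 1))).card : ℤ)
        + ((EF.filter (fun z => z ∈ D ∧
          b * (leg D z : ℤ) < a * ((arm E z : ℤ) + 1) ∧
          a * (arm E z : ℤ) < b * ((leg D z : ℤ) + 1))).card : ℤ) := by
    rw [hswap, ← Finset.sum_add_distrib]
    have : ∀ p ∈ DF, (∑ c ∈ EF, KZ' a b p c) + (∑ c ∈ EF, KZ' a b c p)
        = ∑ c ∈ EF, (DD a b p c + DD a b c p) := by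
      intro p _
      rw [← Finset.sum_add_distrib]
      apply Finset.sum_congr rfl
      intro c _
      exact key a b ha0 hab p c
    rw [Finset.sum_congr rfl this]
    have hsplit2 : ∑ p ∈ DF, ∑ c ∈ EF, (DD a b p c + DD a b c p)
        = (∑ p ∈ DF, ∑ c ∈ EF, DD a b p c) + (∑ p ∈ DF, ∑ c ∈ EF, DD a b c p) := by
      rw [← Finset.sum_add_distrib]
      apply Finset.sum_congr rfl
      intro p _
      rw [← Finset.sum_add_distrib]
    have hcomm2 : ∑ p ∈ DF, ∑ c ∈ EF, DD a b c p = ∑ c ∈ EF, ∑ p ∈ DF, DD a b c p :=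
      Finset.sum_comm
    rw [hsplit2, hcomm2]
    rw [count_lemma ha0 hb0 hD hE hDfin hEfin, count_lemma ha0 hb0 hE hD hEfin hDfin]
  -- identify ncard with Finset.card
  have hn1 : {c : ℤ × ℤ | c ∈ D ∧ c ∈ E ∧
      b * (leg E c : ℤ) < a * ((arm D c : ℤ) + 1) ∧
      a * (arm D c : ℤ) < b * ((leg E c : ℤ) + 1)}
      = ↑(DF.filter (fun z => z ∈ E ∧
          b * (leg E z : ℤ) < a * ((arm D z : ℤ) + 1) ∧
          a * (arm D z : ℤ) < b * ((leg E z : ℤ) + 1))) := by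
    ext z
    simp only [Set.mem_setOf_eq, Finset.coe_filter, hmemD]
  have hn2 : {c : ℤ × ℤ | c ∈ D ∧ c ∈ E ∧
      b * (leg D c : ℤ) < a * ((arm E c : ℤ) + 1) ∧
      a * (arm E c : ℤ) < b * ((leg D c : ℤ) + 1)}
      = ↑(EF.filter (fun z => z ∈ D ∧
          b * (leg D z : ℤ) < a * ((arm E z : ℤ) + 1) ∧
          a * (arm E z : ℤ) < b * ((leg D z : ℤ) + 1))) := by
    ext z
    simp only [Set.mem_setOf_eq, Finset.coe_filter, hmemE]
    tauto
  rw [hB, hsplit, hc1, hc2]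
  rw [show ((∑ i ∈ DF, ∑ j ∈ EF, KZ' a b i j : ℤ) : ℝ) + ((∑ i ∈ EF, ∑ j ∈ DF, KZ' a b i j : ℤ) : ℝ)
      = (((∑ i ∈ DF, ∑ j ∈ EF, KZ' a b i j) + (∑ i ∈ EF, ∑ j ∈ DF, KZ' a b i j) : ℤ) : ℝ) by
    push_cast; ring]
  rw [hmain, hn1, hn2, Set.ncard_coe_finset, Set.ncard_coe_finset]
  push_cast
  ring
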